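/- Let σ be a B-avoiding permutation of {1,...,n-1}. Then the permutation obtained by increasing every value of σ by 1 and inserting the value 1 immediately before the position of the value 2 is a B-avoiding permutation of {1,...,n}. -/

import Mathlib

/-- `l` is a permutation of `{1, ..., n}`, viewed as the sequence of its values. -/
def IsPermOf (l : List ℕ) (n : ℕ) : Prop := l.Perm (List.range' 1 n)

/-- `l` is B-avoiding: there are no indices `a < b < c < d` with
`max {l a, l c} < min {l b, l d}`. -/
def BAvoid (l : List ℕ) : Prop :=
  ∀ a b c d : Fin l.length, a < b → b < c → c < d →
    ¬ (max (l.get a) (l.get c) < min (l.get b) (l.get d))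

/-- increase all values by 1 and insert `1` immediately before the value `2`. -/
def fBefore (σ : List ℕ) : List ℕ :=
  ((σ.map (· + 1)).take ((σ.map (· + 1)).idxOf 2)) ++
    1 :: ((σ.map (· + 1)).drop ((σ.map (· + 1)).idxOf 2))

/-- increase all values by 1 and insert `1` immediately after the value `2`. -/
def fAfter (σ : List ℕ) : List ℕ :=
  ((σ.map (· + 1)).take ((σ.map (· + 1)).idxOf 2 + 1)) ++
    1 :: ((σ.map (· + 1)).drop ((σ.map (· + 1)).idxOf 2 + 1))

/-- increase all values by 1 and append `1` at the end. -/
def fEnd (σ : List ℕ) : List ℕ := σ.map (· + 1) ++ [1]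

/-- increase all values by 1, replace the value `2` by `1`, and append `2` at the end. -/
def fBump (σ : List ℕ) : List ℕ :=
  (σ.map (· + 1)).map (fun x => if x = 2 then 1 else x) ++ [2]

lemma bavoid_iff_sub (l : List ℕ) :
    BAvoid l ↔ ∀ p q r s : ℕ, List.Sublist [p,q,r,s] l → ¬ max p r < min q s := by
  constructor
  · intro hB p q r s hsub
    obtain ⟨is, his, hpw⟩ := List.sublist_eq_map_getElem hsub
    rcases is with _|⟨a,_|⟨b,_|⟨c,_|⟨d,_|⟨e,t⟩⟩⟩⟩⟩ <;> simp at his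
    obtain ⟨hp, hq, hr, hs⟩ := his
    subst hp hq hr hs
    simp [List.pairwise_cons] at hpw
    exact hB a b c d (by omega) (by omega) (by omega)
  · intro h a b c d hab hbc hcd
    have hab' : (a:ℕ) < b := hab
    have hbc' : (b:ℕ) < c := hbc
    have hcd' : (c:ℕ) < d := hcd
    have hsub := List.map_getElem_sublist (l := l) (is := [a,b,c,d]) (by
      simp [List.pairwise_cons, hab', hbc', hcd']; omega)
    exact h _ _ _ _ (by simpa using hsub)

theorem stmt3 (n : ℕ) (hn : 2 ≤ n) (σ : List ℕ)
    (hσ : IsPermOf σ (n - 1)) (hB : BAvoid σ) :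
    IsPermOf (fBefore σ) n ∧ BAvoid (fBefore σ) := by
  set τ := σ.map (· + 1) with hτ
  have hmemσ : ∀ x ∈ σ, 1 ≤ x := fun x hx => by
    have := hσ.mem_iff.mp hx
    rw [List.mem_range'_1] at this; omega
  have hmemτ : ∀ x ∈ τ, 2 ≤ x := by
    intro x hx
    obtain ⟨y, hy, rfl⟩ := List.mem_map.mp hx
    have := hmemσ y hy; omega
  have h1 : 1 ∈ σ := hσ.mem_iff.mpr (by rw [List.mem_range'_1]; omega)
  have h2 : 2 ∈ τ := List.mem_map.mpr ⟨1, h1, rfl⟩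
  set k := τ.idxOf 2 with hk
  have hkl : k < τ.length := List.idxOf_lt_length_iff.mpr h2
  set A := τ.take k with hA
  set B := τ.drop (k+1) with hB'
  have hdrop : τ.drop k = 2 :: B := by
    rw [hB', List.drop_eq_getElem_cons hkl, List.getElem_idxOf hkl]
  have hAB : τ = A ++ 2 :: B := by rw [hA, ← hdrop, List.take_append_drop]
  have key : fBefore σ = A ++ 1 :: 2 :: B := by
    show τ.take k ++ 1 :: τ.drop k = _
    rw [hdrop, hA]
  -- permutation part
  have hτperm : τ.Perm (List.range' 2 (n-1)) := by
    have h1 : List.map (· + 1) (List.range' 1 (n-1)) = List.range' 2 (n-1) := by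
      rw [show ((· + 1) : ℕ → ℕ) = (fun x => 1 + x) by funext x; omega,
        List.map_add_range']
    rw [hτ, ← h1]
    exact hσ.map _
  have hperm : IsPermOf (fBefore σ) n := by
    unfold IsPermOf
    rw [key]
    obtain ⟨m, rfl⟩ : ∃ m, n = m + 1 := ⟨n - 1, by omega⟩
    simp only [Nat.add_sub_cancel] at hτperm
    refine List.Perm.trans List.perm_middle ?_
    rw [← hAB]
    have hr : List.range' 1 (m+1) = 1 :: List.range' 2 m := by
      simpa using List.range'_succ (s := 1) (n := m) (step := 1)
    rw [hr]
    exact hτperm.cons 1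
  refine ⟨hperm, ?_⟩
  -- B-avoidance
  have hBsub := (bavoid_iff_sub σ).mp hB
  have hτsub : ∀ p q r s : ℕ, List.Sublist [p,q,r,s] τ → ¬ max p r < min q s := by
    intro p q r s hsub hlt
    obtain ⟨l', hl', hmap⟩ := List.sublist_map_iff.mp hsub
    rcases l' with _|⟨a,_|⟨b,_|⟨c,_|⟨d,_|⟨e,t⟩⟩⟩⟩⟩ <;> simp at hmap
    obtain ⟨hp, hq, hr, hs⟩ := hmap
    exact hBsub a b c d hl' (by omega)
  rw [key, bavoid_iff_sub]
  intro p q r s hsub hlt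
  rw [List.sublist_append_iff] at hsub
  obtain ⟨l1, l2, heq, h1A, h2B⟩ := hsub
  rcases List.sublist_cons_iff.mp h2B with h2B' | ⟨t, rfl, htB⟩
  · -- no use of the inserted 1 : pattern inside τ
    exact hτsub p q r s (heq ▸ (h1A.append h2B').trans (by rw [← hAB])) hlt
  · -- l2 = 1 :: t
    rcases l1 with _|⟨x,_|⟨y,_|⟨z,_|⟨w,l⟩⟩⟩⟩ <;> simp at heq
    · -- p = 1, [q,r,s] <+ 2 :: B
      obtain ⟨hp1, rfl⟩ := heq
      have hr2 : 2 ≤ r := hmemτ r (hAB ▸ List.mem_append_right A (htB.subset (by simp)))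
      have hq2 : q ≠ 2 := by omega
      rcases List.sublist_cons_iff.mp htB with htB' | ⟨t', ht', _⟩
      · have : List.Sublist [2,q,r,s] τ := by
          rw [hAB]
          exact (List.nil_sublist A).append (List.cons_sublist_cons.mpr htB')
        exact hτsub 2 q r s this (by omega)
      · simp at ht'; omega
    · -- q = 1 : impossible
      obtain ⟨rfl, hq1, rfl⟩ := heq
      have : 2 ≤ p := hmemτ p (hAB ▸ List.mem_append_left _ (h1A.subset (by simp)))
      omega
    · -- r = 1, [s] <+ 2 :: B
      obtain ⟨rfl, rfl, hr1, rfl⟩ := heq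
      have hp2 : 2 ≤ p := hmemτ p (hAB ▸ List.mem_append_left _ (h1A.subset (by simp)))
      have hs2 : s ≠ 2 := by omega
      rcases List.sublist_cons_iff.mp htB with htB' | ⟨t', ht', _⟩
      · have : List.Sublist [p,q,2,s] τ := by
          rw [hAB]
          exact h1A.append (List.cons_sublist_cons.mpr htB')
        exact hτsub p q 2 s this (by omega)
      · simp at ht'; omega
    · -- s = 1 : impossible
      obtain ⟨rfl, rfl, rfl, hs1, -⟩ := heq
      have : 2 ≤ p := hmemτ p (hAB ▸ List.mem_append_left _ (h1A.subset (by simp)))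
      omega
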